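/- Let G be a minimal counterexample to the statement that all planar graphs have 3-weak-dynamic number at most 6, chosen with the fewest edges and, among those, the fewest vertices. Then G does not contain six distinct vertices v_1, v_2, v_3, v_4, v_5, v_6 such that v_1v_2, v_2v_3, v_3v_4, v_2v_5, v_3v_6 are edges of G, d(v_1) ≥ 4, d(v_4) ≥ 4, and d(v_2) = d(v_3) = d(v_5) = d(v_6) = 3. -/

import Mathlib

open SimpleGraph

/-- `H` is a minor of `G`: there are nonempty, connected, pairwise disjoint branch sets
in `G`, with an edge of `G` between the branch sets of any two adjacent vertices of `H`. -/
def HasMinor {V W : Type} (G : SimpleGraph V) (H : SimpleGraph W) : Prop :=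
  ∃ f : W → Set V,
    (∀ w, (f w).Nonempty) ∧
    (∀ w, (G.induce (f w)).Connected) ∧
    (∀ w w', w ≠ w' → Disjoint (f w) (f w')) ∧
    (∀ w w', H.Adj w w' → ∃ a ∈ f w, ∃ b ∈ f w', G.Adj a b)

/-- A graph is planar iff it has no `K₅` minor and no `K_{3,3}` minor (Wagner's theorem). -/
def IsPlanar {V : Type} (G : SimpleGraph V) : Prop :=
  ¬ HasMinor G (⊤ : SimpleGraph (Fin 5)) ∧
  ¬ HasMinor G (completeBipartiteGraph (Fin 3) (Fin 3))

/-- The degree of a vertex `v`, the number of its neighbors. -/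
noncomputable def deg {V : Type} (G : SimpleGraph V) (v : V) : ℕ :=
  (G.neighborSet v).ncard

/-- `G` admits a `k`-weak-dynamic coloring with `n` colors: a (not necessarily proper)
coloring such that every vertex `v` sees at least `min k (d v)` colors on its neighborhood. -/
def WDColorable {V : Type} (G : SimpleGraph V) (k n : ℕ) : Prop :=
  ∃ c : V → Fin n, ∀ v, min k (deg G v) ≤ (c '' G.neighborSet v).ncard

lemma ncard_triple {α : Type} {a b c : α} (hab : a ≠ b) (hac : a ≠ c) (hbc : b ≠ c) :
    ({a, b, c} : Set α).ncard = 3 := by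
  rw [Set.ncard_insert_of_notMem (by simp [hab, hac]) ((Set.finite_singleton c).insert b),
    Set.ncard_insert_of_notMem (by simp [hbc]) (Set.finite_singleton c),
    Set.ncard_singleton]

lemma ncard_pair {α : Type} {a b : α} (hab : a ≠ b) : ({a, b} : Set α).ncard = 2 := by
  rw [Set.ncard_insert_of_notMem (by simp [hab]) (Set.finite_singleton b), Set.ncard_singleton]

lemma myHasMinor_mono {V W : Type} {G G' : SimpleGraph V} (h : G ≤ G')
    {H : SimpleGraph W} (hm : HasMinor G H) : HasMinor G' H := by
  obtain ⟨f, h1, h2, h3, h4⟩ := hm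
  refine ⟨f, h1, fun w => (h2 w).mono (fun {a b} hab => ?_), h3, fun w w' hw => ?_⟩
  · exact h hab
  · obtain ⟨a, ha, b, hb, hab⟩ := h4 w w' hw
    exact ⟨a, ha, b, hb, h hab⟩

lemma myIsPlanar_mono {V : Type} {G G' : SimpleGraph V} (h : G ≤ G')
    (hp : IsPlanar G') : IsPlanar G :=
  ⟨fun h5 => hp.1 (myHasMinor_mono h h5), fun h33 => hp.2 (myHasMinor_mono h h33)⟩

lemma pick_color (F : Set (Fin 6)) (h : F.ncard ≤ 5) : ∃ k, k ∉ F := by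
  by_contra hc
  push_neg at hc
  have hsub : (Set.univ : Set (Fin 6)) ⊆ F := fun k _ => hc k
  have := Set.ncard_le_ncard hsub (Set.toFinite F)
  rw [Set.ncard_univ] at this
  simp [Nat.card_eq_fintype_card] at this
  omega

lemma outside_bound {V : Type} [Fintype V] (G : SimpleGraph V)
    (v₂ v₃ v₅ v₆ : V) (c c' : V → Fin 6) (s t : Fin 6)
    (hs' : c' v₅ = s) (ht' : c' v₆ = t)
    (v : V)
    (hagree : ∀ w ∈ G.neighborSet v \ ({v₂, v₃, v₅, v₆} : Set V), c' w = c w)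
    (hkey : min 3 (deg G v) ≤ (c '' (G.neighborSet v \ ({v₂, v₃} : Set V))).ncard)
    (hs : v₅ ∈ G.neighborSet v →
      (c '' (G.neighborSet v \ ({v₂, v₃, v₅, v₆} : Set V))).ncard ≤ 2 →
      s ∉ c '' (G.neighborSet v \ ({v₂, v₃, v₅, v₆} : Set V)))
    (ht : v₆ ∈ G.neighborSet v →
      (c '' (G.neighborSet v \ ({v₂, v₃, v₅, v₆} : Set V))).ncard ≤ 2 →
      t ∉ c '' (G.neighborSet v \ ({v₂, v₃, v₅, v₆} : Set V)))
    (hst : v₅ ∈ G.neighborSet v → v₆ ∈ G.neighborSet v →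
      (c '' (G.neighborSet v \ ({v₂, v₃, v₅, v₆} : Set V))).ncard ≤ 1 → s ≠ t) :
    min 3 (deg G v) ≤ (c' '' G.neighborSet v).ncard := by
  classical
  set Nv := G.neighborSet v with hNv
  set D := c '' (Nv \ ({v₂, v₃, v₅, v₆} : Set V)) with hD
  have hDsub : D ⊆ c' '' Nv := by
    rintro k ⟨w, hw, rfl⟩
    exact ⟨w, hw.1, hagree w hw⟩
  have htarget : (c' '' Nv).ncard ≥ D.ncard := Set.ncard_le_ncard hDsub (Set.toFinite _)
  by_cases hD3 : 3 ≤ D.ncard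
  · exact le_trans (le_trans (min_le_left _ _) hD3) htarget
  push_neg at hD3
  have hD2 : D.ncard ≤ 2 := by omega
  have hsplit : c '' (Nv \ ({v₂, v₃} : Set V)) ⊆ D ∪ c '' (Nv ∩ ({v₅, v₆} : Set V)) := by
    rintro k ⟨w, hw, rfl⟩
    by_cases hwR : w ∈ ({v₅, v₆} : Set V)
    · exact Or.inr ⟨w, ⟨hw.1, hwR⟩, rfl⟩
    · refine Or.inl ⟨w, ⟨hw.1, ?_⟩, rfl⟩
      intro hmem
      rcases hmem with h | h | h
      · exact hw.2 (Or.inl h)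
      · exact hw.2 (Or.inr (Set.mem_singleton_iff.mpr h))
      · exact hwR h
  have hkey2 : min 3 (deg G v) ≤ D.ncard + (c '' (Nv ∩ ({v₅, v₆} : Set V))).ncard :=
    le_trans hkey (le_trans (Set.ncard_le_ncard hsplit (Set.toFinite _))
      (Set.ncard_union_le _ _))
  by_cases hm5 : v₅ ∈ Nv
  · by_cases hm6 : v₆ ∈ Nv
    · have hs0 : s ∉ D := hs hm5 hD2
      by_cases hD1 : D.ncard ≤ 1
      · have ht0 : t ∉ D := ht hm6 hD2
        have hst0 : s ≠ t := hst hm5 hm6 hD1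
        have hsub2 : insert s (insert t D) ⊆ c' '' Nv := by
          refine Set.insert_subset ⟨v₅, hm5, hs'⟩ (Set.insert_subset ⟨v₆, hm6, ht'⟩ hDsub)
        have hcard : (insert s (insert t D)).ncard = D.ncard + 2 := by
          rw [Set.ncard_insert_of_notMem (by simp [hst0, hs0])
              (Set.Finite.insert _ (Set.toFinite _)),
            Set.ncard_insert_of_notMem ht0 (Set.toFinite _)]
        have him : (c '' (Nv ∩ ({v₅, v₆} : Set V))).ncard ≤ 2 := by
          refine le_trans (Set.ncard_image_le (Set.toFinite _)) ?_
          refine le_trans (Set.ncard_le_ncard Set.inter_subset_right (Set.toFinite _)) ?_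
          exact le_trans (Set.ncard_insert_le _ _) (by rw [Set.ncard_singleton])
        have := Set.ncard_le_ncard hsub2 (Set.toFinite _)
        omega
      · have hsub2 : insert s D ⊆ c' '' Nv :=
          Set.insert_subset ⟨v₅, hm5, hs'⟩ hDsub
        have hcard : (insert s D).ncard = D.ncard + 1 :=
          Set.ncard_insert_of_notMem hs0 (Set.toFinite _)
        have := Set.ncard_le_ncard hsub2 (Set.toFinite _)
        have hmin : min 3 (deg G v) ≤ 3 := min_le_left _ _
        omega
    · have him : (c '' (Nv ∩ ({v₅, v₆} : Set V))).ncard ≤ 1 := by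
        refine le_trans (Set.ncard_image_le (Set.toFinite _)) ?_
        refine le_trans (Set.ncard_le_ncard (fun w hw => ?_) (Set.toFinite _))
          (le_of_eq (Set.ncard_singleton v₅))
        rcases hw.2 with h | h
        · exact h
        · exact absurd (Set.mem_singleton_iff.mp h ▸ hw.1) hm6
      have hs0 : s ∉ D := hs hm5 hD2
      have hsub2 : insert s D ⊆ c' '' Nv := Set.insert_subset ⟨v₅, hm5, hs'⟩ hDsub
      have hcard : (insert s D).ncard = D.ncard + 1 :=
        Set.ncard_insert_of_notMem hs0 (Set.toFinite _)
      have := Set.ncard_le_ncard hsub2 (Set.toFinite _)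
      omega
  · by_cases hm6 : v₆ ∈ Nv
    · have him : (c '' (Nv ∩ ({v₅, v₆} : Set V))).ncard ≤ 1 := by
        refine le_trans (Set.ncard_image_le (Set.toFinite _)) ?_
        refine le_trans (Set.ncard_le_ncard (fun w hw => ?_) (Set.toFinite _))
          (le_of_eq (Set.ncard_singleton v₆))
        rcases hw.2 with h | h
        · exact absurd (h ▸ hw.1) hm5
        · exact h
      have ht0 : t ∉ D := ht hm6 hD2
      have hsub2 : insert t D ⊆ c' '' Nv := Set.insert_subset ⟨v₆, hm6, ht'⟩ hDsub
      have hcard : (insert t D).ncard = D.ncard + 1 :=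
        Set.ncard_insert_of_notMem ht0 (Set.toFinite _)
      have := Set.ncard_le_ncard hsub2 (Set.toFinite _)
      omega
    · have him : (c '' (Nv ∩ ({v₅, v₆} : Set V))).ncard = 0 := by
        have hemp : Nv ∩ ({v₅, v₆} : Set V) = ∅ := by
          ext w
          simp only [Set.mem_inter_iff, Set.mem_insert_iff, Set.mem_singleton_iff,
            Set.mem_empty_iff_false, iff_false, not_and, not_or]
          intro hw
          constructor
          · intro h; exact hm5 (h ▸ hw)
          · intro h; exact hm6 (h ▸ hw)
        rw [hemp, Set.image_empty, Set.ncard_empty]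
      omega



/-- A minimal counterexample contains no six distinct vertices v₁,…,v₆ with edges v₁v₂, v₂v₃, v₃v₄, v₂v₅, v₃v₆, where d(v₁) ≥ 4, d(v₄) ≥ 4 and d(v₂) = d(v₃) = d(v₅) = d(v₆) = 3. -/
theorem minCounterexample_no_4_3_3_4_configuration {V : Type} [Fintype V] (G : SimpleGraph V)
    (hplanar : IsPlanar G) (hcex : ¬ WDColorable G 3 6)
    (hminEdges : ∀ (W : Type) [Fintype W] (H : SimpleGraph W),
      IsPlanar H → H.edgeSet.ncard < G.edgeSet.ncard → WDColorable H 3 6)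
    (hminVerts : ∀ (W : Type) [Fintype W] (H : SimpleGraph W),
      IsPlanar H → ¬ WDColorable H 3 6 → H.edgeSet.ncard = G.edgeSet.ncard →
      Nat.card V ≤ Nat.card W) :
    ¬ ∃ v₁ v₂ v₃ v₄ v₅ v₆ : V,
      ([v₁, v₂, v₃, v₄, v₅, v₆] : List V).Pairwise (· ≠ ·) ∧
      G.Adj v₁ v₂ ∧ G.Adj v₂ v₃ ∧ G.Adj v₃ v₄ ∧ G.Adj v₂ v₅ ∧ G.Adj v₃ v₆ ∧
      4 ≤ deg G v₁ ∧ 4 ≤ deg G v₄ ∧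
      deg G v₂ = 3 ∧ deg G v₃ = 3 ∧ deg G v₅ = 3 ∧ deg G v₆ = 3 := by
  classical
  rintro ⟨v₁, v₂, v₃, v₄, v₅, v₆, hpw, h12, h23, h34, h25, h36, hd1, hd4, hd2, hd3, hd5, hd6⟩
  simp only [List.pairwise_cons, List.mem_cons, List.mem_singleton, List.not_mem_nil,
    List.Pairwise.nil, forall_eq_or_imp, forall_eq, ne_eq] at hpw
  obtain ⟨⟨e12, e13, e14, e15, e16, -⟩, ⟨e23, e24, e25, e26, -⟩, ⟨e34, e35, e36, -⟩,
    ⟨e45, e46, -⟩, ⟨e56, -⟩, -⟩ := hpw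
  set H : SimpleGraph V := G.deleteEdges {e | v₂ ∈ e ∨ v₃ ∈ e} with hHdef
  have hHadj : ∀ u w : V, H.Adj u w ↔ G.Adj u w ∧ (u ≠ v₂ ∧ u ≠ v₃ ∧ w ≠ v₂ ∧ w ≠ v₃) := by
    intro u w
    rw [hHdef, SimpleGraph.deleteEdges_adj]
    simp only [Set.mem_setOf_eq, Sym2.mem_iff, not_or]
    constructor
    · rintro ⟨h, ⟨h1, h2⟩, h3, h4⟩
      exact ⟨h, fun e => h1 e.symm, fun e => h3 e.symm, fun e => h2 e.symm, fun e => h4 e.symm⟩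
    · rintro ⟨h, h1, h2, h3, h4⟩
      exact ⟨h, ⟨fun e => h1 e.symm, fun e => h3 e.symm⟩, fun e => h2 e.symm, fun e => h4 e.symm⟩
  have hHplanar : IsPlanar H := myIsPlanar_mono (SimpleGraph.deleteEdges_le _) hplanar
  have hHlt : H.edgeSet.ncard < G.edgeSet.ncard := by
    apply Set.ncard_lt_ncard _ (Set.toFinite _)
    rw [hHdef, SimpleGraph.edgeSet_deleteEdges]
    constructor
    · exact Set.diff_subset
    · intro hsub
      have h1 : s(v₂, v₃) ∈ G.edgeSet := h23
      have h2 := hsub h1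
      simp only [Set.mem_diff, Set.mem_setOf_eq, Sym2.mem_iff] at h2
      tauto
  obtain ⟨c, hc⟩ := hminEdges V H hHplanar hHlt
  have hswap : ∀ {u w : V}, u ∈ G.neighborSet w → w ∈ G.neighborSet u :=
    fun {u w} h => SimpleGraph.Adj.symm h
  have hN2 : G.neighborSet v₂ = {v₁, v₃, v₅} := by
    symm
    apply Set.eq_of_subset_of_ncard_le ?_ ?_ (Set.toFinite _)
    · intro w hw
      rcases hw with h | h | h
      · subst h; exact h12.symm
      · subst h; exact h23
      · rw [Set.mem_singleton_iff] at h; subst h; exact h25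
    · rw [ncard_triple e13 e15 e35]
      exact hd2.le
  have hN3 : G.neighborSet v₃ = {v₂, v₄, v₆} := by
    symm
    apply Set.eq_of_subset_of_ncard_le ?_ ?_ (Set.toFinite _)
    · intro w hw
      rcases hw with h | h | h
      · subst h; exact h23.symm
      · subst h; exact h34
      · rw [Set.mem_singleton_iff] at h; subst h; exact h36
    · rw [ncard_triple e24 e26 e46]
      exact hd3.le
  have hNH : ∀ v : V, v ≠ v₂ → v ≠ v₃ → H.neighborSet v = G.neighborSet v \ {v₂, v₃} := by
    intro v h2 h3
    ext w
    simp only [SimpleGraph.mem_neighborSet, Set.mem_diff, Set.mem_insert_iff,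
      Set.mem_singleton_iff, hHadj v w, not_or]
    tauto
  have hkeyH : ∀ v : V, v ∉ ({v₂, v₃, v₅, v₆} : Set V) →
      min 3 (deg G v) ≤ (c '' (G.neighborSet v \ ({v₂, v₃} : Set V))).ncard := by
    intro v hv
    simp only [Set.mem_insert_iff, Set.mem_singleton_iff, not_or] at hv
    obtain ⟨hv2, hv3, hv5, hv6⟩ := hv
    have hHC := hc v
    unfold deg at hHC
    rw [hNH v hv2 hv3] at hHC
    refine le_trans ?_ hHC
    by_cases hb2 : v₂ ∈ G.neighborSet v
    · have hvv1 : v = v₁ := by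
        have hmem : v ∈ ({v₁, v₃, v₅} : Set V) := by rw [← hN2]; exact hswap hb2
        rcases hmem with h | h | h
        · exact h
        · exact absurd h hv3
        · exact absurd (Set.mem_singleton_iff.mp h) hv5
      have h3notin : v₃ ∉ G.neighborSet v := by
        intro hh
        have hmm : v ∈ ({v₂, v₄, v₆} : Set V) := by rw [← hN3]; exact hswap hh
        rw [hvv1] at hmm
        rcases hmm with h | h | h
        · exact e12 h
        · exact e14 h
        · exact e16 (Set.mem_singleton_iff.mp h)
      have hseq : G.neighborSet v \ ({v₂, v₃} : Set V) = G.neighborSet v \ {v₂} := by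
        ext w
        simp only [Set.mem_diff, Set.mem_insert_iff, Set.mem_singleton_iff, not_or]
        constructor
        · rintro ⟨hw, hh2, hh3⟩; exact ⟨hw, hh2⟩
        · rintro ⟨hw, hh2⟩; exact ⟨hw, hh2, fun e => h3notin (e ▸ hw)⟩
      rw [hseq, Set.ncard_diff_singleton_of_mem hb2]
      have hdd : 4 ≤ (G.neighborSet v).ncard := by rw [hvv1]; exact hd1
      omega
    · by_cases hb3 : v₃ ∈ G.neighborSet v
      · have hvv4 : v = v₄ := by
          have hmem : v ∈ ({v₂, v₄, v₆} : Set V) := by rw [← hN3]; exact hswap hb3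
          rcases hmem with h | h | h
          · exact absurd h hv2
          · exact h
          · exact absurd (Set.mem_singleton_iff.mp h) hv6
        have hseq : G.neighborSet v \ ({v₂, v₃} : Set V) = G.neighborSet v \ {v₃} := by
          ext w
          simp only [Set.mem_diff, Set.mem_insert_iff, Set.mem_singleton_iff, not_or]
          constructor
          · rintro ⟨hw, hh2, hh3⟩; exact ⟨hw, hh3⟩
          · rintro ⟨hw, hh3⟩; exact ⟨hw, fun e => hb2 (e ▸ hw), hh3⟩
        rw [hseq, Set.ncard_diff_singleton_of_mem hb3]
        have hdd : 4 ≤ (G.neighborSet v).ncard := by rw [hvv4]; exact hd4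
        omega
      · have hseq : G.neighborSet v \ ({v₂, v₃} : Set V) = G.neighborSet v := by
          ext w
          simp only [Set.mem_diff, Set.mem_insert_iff, Set.mem_singleton_iff, not_or]
          constructor
          · rintro ⟨hw, -⟩; exact hw
          · intro hw
            exact ⟨hw, fun e => hb2 (e ▸ hw), fun e => hb3 (e ▸ hw)⟩
        rw [hseq]
        exact le_refl _
  -- basic membership facts
  have hv1R : v₁ ∉ ({v₂, v₃, v₅, v₆} : Set V) := by
    simp only [Set.mem_insert_iff, Set.mem_singleton_iff, not_or]
    exact ⟨e12, e13, e15, e16⟩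
  have hv4R : v₄ ∉ ({v₂, v₃, v₅, v₆} : Set V) := by
    simp only [Set.mem_insert_iff, Set.mem_singleton_iff, not_or]
    exact ⟨Ne.symm e24, Ne.symm e34, e45, e46⟩
  have h25' : v₂ ∈ G.neighborSet v₅ := h25.symm
  have h36' : v₃ ∈ G.neighborSet v₆ := h36.symm
  have hn35 : v₃ ∉ G.neighborSet v₅ := by
    intro h
    have hmm : v₅ ∈ ({v₂, v₄, v₆} : Set V) := by rw [← hN3]; exact hswap h
    rcases hmm with h' | h' | h'
    · exact e25 h'.symm
    · exact e45 h'.symm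
    · exact e56 (Set.mem_singleton_iff.mp h')
  have hn55 : v₅ ∉ G.neighborSet v₅ := fun h => G.irrefl h
  have hn26 : v₂ ∉ G.neighborSet v₆ := by
    intro h
    have hmm : v₆ ∈ ({v₁, v₃, v₅} : Set V) := by rw [← hN2]; exact hswap h
    rcases hmm with h' | h' | h'
    · exact e16 h'.symm
    · exact e36 h'.symm
    · exact e56 (Set.mem_singleton_iff.mp h').symm
  have hn66 : v₆ ∉ G.neighborSet v₆ := fun h => G.irrefl h
  -- the truncated color sets
  set T : V → Set (Fin 6) := fun u =>
    if (c '' (G.neighborSet u \ ({v₂, v₃, v₅, v₆} : Set V))).ncard ≤ 2 then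
      c '' (G.neighborSet u \ ({v₂, v₃, v₅, v₆} : Set V)) else ∅ with hTdef
  have hTcard : ∀ u, (T u).ncard ≤ 2 := by
    intro u
    simp only [hTdef]
    split_ifs with h
    · exact h
    · simp
  have hTs : ∀ u, (c '' (G.neighborSet u \ ({v₂, v₃, v₅, v₆} : Set V))).ncard ≤ 2 →
      T u = c '' (G.neighborSet u \ ({v₂, v₃, v₅, v₆} : Set V)) := by
    intro u h
    simp only [hTdef]
    rw [if_pos h]
  by_cases hA : G.Adj v₅ v₆
  · -- Case II : v₅ and v₆ adjacent
    have hm65 : v₆ ∈ G.neighborSet v₅ := hA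
    have hm56 : v₅ ∈ G.neighborSet v₆ := hA.symm
    have hN5R : G.neighborSet v₅ \ ({v₂, v₃, v₅, v₆} : Set V) =
        (G.neighborSet v₅ \ {v₂}) \ {v₆} := by
      ext u
      simp only [Set.mem_diff, Set.mem_insert_iff, Set.mem_singleton_iff, not_or]
      constructor
      · rintro ⟨hu, h2', h3', h5', h6'⟩; exact ⟨⟨hu, h2'⟩, h6'⟩
      · rintro ⟨⟨hu, h2'⟩, h6'⟩
        exact ⟨hu, h2', fun e => hn35 (e ▸ hu), fun e => hn55 (e ▸ hu), h6'⟩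
    have hm65' : v₆ ∈ G.neighborSet v₅ \ {v₂} :=
      ⟨hm65, by simp only [Set.mem_singleton_iff]; exact Ne.symm e26⟩
    have hcard5 : (G.neighborSet v₅ \ ({v₂, v₃, v₅, v₆} : Set V)).ncard = 1 := by
      rw [hN5R, Set.ncard_diff_singleton_of_mem hm65',
        Set.ncard_diff_singleton_of_mem h25']
      have hq : (G.neighborSet v₅).ncard = 3 := hd5
      omega
    obtain ⟨z, hzS⟩ := Set.ncard_eq_one.mp hcard5
    have hzmem : z ∈ G.neighborSet v₅ \ ({v₂, v₃, v₅, v₆} : Set V) := by rw [hzS]; rfl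
    have hzN : z ∈ G.neighborSet v₅ := hzmem.1
    have hzR : z ∉ ({v₂, v₃, v₅, v₆} : Set V) := hzmem.2
    have hz' : z ≠ v₂ ∧ z ≠ v₃ ∧ z ≠ v₅ ∧ z ≠ v₆ := by
      simpa only [Set.mem_insert_iff, Set.mem_singleton_iff, not_or] using hzR
    have hN6R : G.neighborSet v₆ \ ({v₂, v₃, v₅, v₆} : Set V) =
        (G.neighborSet v₆ \ {v₃}) \ {v₅} := by
      ext u
      simp only [Set.mem_diff, Set.mem_insert_iff, Set.mem_singleton_iff, not_or]
      constructor
      · rintro ⟨hu, h2', h3', h5', h6'⟩; exact ⟨⟨hu, h3'⟩, h5'⟩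
      · rintro ⟨⟨hu, h3'⟩, h5'⟩
        exact ⟨hu, fun e => hn26 (e ▸ hu), h3', h5', fun e => hn66 (e ▸ hu)⟩
    have hm56' : v₅ ∈ G.neighborSet v₆ \ {v₃} :=
      ⟨hm56, by simp only [Set.mem_singleton_iff]; exact Ne.symm e35⟩
    have hcard6 : (G.neighborSet v₆ \ ({v₂, v₃, v₅, v₆} : Set V)).ncard = 1 := by
      rw [hN6R, Set.ncard_diff_singleton_of_mem hm56',
        Set.ncard_diff_singleton_of_mem h36']
      have hq : (G.neighborSet v₆).ncard = 3 := hd6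
      omega
    obtain ⟨w, hwS⟩ := Set.ncard_eq_one.mp hcard6
    have hwmem : w ∈ G.neighborSet v₆ \ ({v₂, v₃, v₅, v₆} : Set V) := by rw [hwS]; rfl
    have hwN : w ∈ G.neighborSet v₆ := hwmem.1
    have hwR : w ∉ ({v₂, v₃, v₅, v₆} : Set V) := hwmem.2
    have hw' : w ≠ v₂ ∧ w ≠ v₃ ∧ w ≠ v₅ ∧ w ≠ v₆ := by
      simpa only [Set.mem_insert_iff, Set.mem_singleton_iff, not_or] using hwR
    have hN5 : G.neighborSet v₅ = {v₂, v₆, z} := by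
      symm
      apply Set.eq_of_subset_of_ncard_le ?_ ?_ (Set.toFinite _)
      · intro u hu
        rcases hu with h | h | h
        · subst h; exact h25'
        · subst h; exact hm65
        · rw [Set.mem_singleton_iff] at h; subst h; exact hzN
      · rw [ncard_triple e26 (Ne.symm hz'.1) (Ne.symm hz'.2.2.2)]
        exact hd5.le
    have hN6 : G.neighborSet v₆ = {v₃, v₅, w} := by
      symm
      apply Set.eq_of_subset_of_ncard_le ?_ ?_ (Set.toFinite _)
      · intro u hu
        rcases hu with h | h | h
        · subst h; exact h36'
        · subst h; exact hm56
        · rw [Set.mem_singleton_iff] at h; subst h; exact hwN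
      · rw [ncard_triple e35 (Ne.symm hw'.2.1) (Ne.symm hw'.2.2.1)]
        exact hd6.le
    -- pick the new colors
    obtain ⟨s, hsF⟩ := pick_color (({c v₁} : Set (Fin 6)) ∪ T z ∪ {c w}) (by
      refine le_trans (Set.ncard_union_le _ _) ?_
      have hu1 := Set.ncard_union_le ({c v₁} : Set (Fin 6)) (T z)
      have hu2 := hTcard z
      rw [Set.ncard_singleton] at *
      omega)
    obtain ⟨t, htF⟩ := pick_color (({c v₄} : Set (Fin 6)) ∪ T w ∪ {c z} ∪
        (if z ∈ G.neighborSet v₆ ∧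
            (c '' (G.neighborSet z \ ({v₂, v₃, v₅, v₆} : Set V))).ncard ≤ 1 then
          ({s} : Set (Fin 6)) else ∅)) (by
      have hu0 := Set.ncard_union_le (({c v₄} : Set (Fin 6)) ∪ T w ∪ {c z})
        (if z ∈ G.neighborSet v₆ ∧
            (c '' (G.neighborSet z \ ({v₂, v₃, v₅, v₆} : Set V))).ncard ≤ 1 then
          ({s} : Set (Fin 6)) else ∅)
      have hu1 := Set.ncard_union_le (({c v₄} : Set (Fin 6)) ∪ T w) ({c z} : Set (Fin 6))
      have hu2 := Set.ncard_union_le ({c v₄} : Set (Fin 6)) (T w)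
      have hu3 := hTcard w
      have hu4 : (if z ∈ G.neighborSet v₆ ∧
          (c '' (G.neighborSet z \ ({v₂, v₃, v₅, v₆} : Set V))).ncard ≤ 1 then
          ({s} : Set (Fin 6)) else ∅).ncard ≤ 1 := by
        split_ifs
        · rw [Set.ncard_singleton]
        · simp
      rw [Set.ncard_singleton] at *
      omega)
    obtain ⟨a, haF⟩ := pick_color (({c v₄, t} : Set (Fin 6)) ∪
        c '' (G.neighborSet v₅ \ ({v₂, v₃, v₅, v₆} : Set V))) (by
      have hu0 := Set.ncard_union_le ({c v₄, t} : Set (Fin 6))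
        (c '' (G.neighborSet v₅ \ ({v₂, v₃, v₅, v₆} : Set V)))
      have hu1 : ({c v₄, t} : Set (Fin 6)).ncard ≤ 2 :=
        le_trans (Set.ncard_insert_le _ _) (by rw [Set.ncard_singleton])
      have hu2 : (c '' (G.neighborSet v₅ \ ({v₂, v₃, v₅, v₆} : Set V))).ncard ≤ 1 := by
        rw [hzS, Set.image_singleton, Set.ncard_singleton]
      omega)
    obtain ⟨b, hbF⟩ := pick_color (({c v₁, s} : Set (Fin 6)) ∪
        c '' (G.neighborSet v₆ \ ({v₂, v₃, v₅, v₆} : Set V))) (by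
      have hu0 := Set.ncard_union_le ({c v₁, s} : Set (Fin 6))
        (c '' (G.neighborSet v₆ \ ({v₂, v₃, v₅, v₆} : Set V)))
      have hu1 : ({c v₁, s} : Set (Fin 6)).ncard ≤ 2 :=
        le_trans (Set.ncard_insert_le _ _) (by rw [Set.ncard_singleton])
      have hu2 : (c '' (G.neighborSet v₆ \ ({v₂, v₃, v₅, v₆} : Set V))).ncard ≤ 1 := by
        rw [hwS, Set.image_singleton, Set.ncard_singleton]
      omega)
    -- the new coloring
    set c' : V → Fin 6 := fun u =>
      if u = v₂ then a else if u = v₃ then b else if u = v₅ then s else if u = v₆ then t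
      else c u with hc'def
    have hc'2 : c' v₂ = a := by
      show (if v₂ = v₂ then a else if v₂ = v₃ then b else if v₂ = v₅ then s
        else if v₂ = v₆ then t else c v₂) = a
      rw [if_pos rfl]
    have hc'3 : c' v₃ = b := by
      show (if v₃ = v₂ then a else if v₃ = v₃ then b else if v₃ = v₅ then s
        else if v₃ = v₆ then t else c v₃) = b
      rw [if_neg (Ne.symm e23), if_pos rfl]
    have hc'5 : c' v₅ = s := by
      show (if v₅ = v₂ then a else if v₅ = v₃ then b else if v₅ = v₅ then s
        else if v₅ = v₆ then t else c v₅) = s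
      rw [if_neg (Ne.symm e25), if_neg (Ne.symm e35), if_pos rfl]
    have hc'6 : c' v₆ = t := by
      show (if v₆ = v₂ then a else if v₆ = v₃ then b else if v₆ = v₅ then s
        else if v₆ = v₆ then t else c v₆) = t
      rw [if_neg (Ne.symm e26), if_neg (Ne.symm e36), if_neg (Ne.symm e56), if_pos rfl]
    have hc'o : ∀ u : V, u ∉ ({v₂, v₃, v₅, v₆} : Set V) → c' u = c u := by
      intro u hu
      simp only [Set.mem_insert_iff, Set.mem_singleton_iff, not_or] at hu
      show (if u = v₂ then a else if u = v₃ then b else if u = v₅ then s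
        else if u = v₆ then t else c u) = c u
      rw [if_neg hu.1, if_neg hu.2.1, if_neg hu.2.2.1, if_neg hu.2.2.2]
    -- color distinctness facts
    have hb1 : b ≠ c v₁ := fun e => hbF (by rw [e]; exact Or.inl (Set.mem_insert _ _))
    have hbs : b ≠ s := fun e => hbF (by rw [e]; exact Or.inl (Set.mem_insert_of_mem _ rfl))
    have hs1 : s ≠ c v₁ := fun e => hsF (by rw [e]; exact Or.inl (Or.inl rfl))
    have ha4 : a ≠ c v₄ := fun e => haF (by rw [e]; exact Or.inl (Set.mem_insert _ _))
    have hat : a ≠ t := fun e => haF (by rw [e]; exact Or.inl (Set.mem_insert_of_mem _ rfl))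
    have ht4 : t ≠ c v₄ := fun e => htF (by rw [e]; exact Or.inl (Or.inl (Or.inl rfl)))
    have htz : t ≠ c z := fun e => htF (by rw [e]; exact Or.inl (Or.inr rfl))
    have haz : a ≠ c z := fun e => haF (by
      rw [e]
      exact Or.inr ⟨z, by rw [hzS]; rfl, rfl⟩)
    have hscw : s ≠ c w := fun e => hsF (by rw [e]; exact Or.inr rfl)
    have hbcw : b ≠ c w := fun e => hbF (by
      rw [e]
      exact Or.inr ⟨w, by rw [hwS]; rfl, rfl⟩)
    refine hcex ⟨c', fun v => ?_⟩
    by_cases hv2 : v = v₂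
    · rw [hv2]
      rw [hN2, Set.image_insert_eq, Set.image_insert_eq, Set.image_singleton,
        hc'o v₁ hv1R, hc'3, hc'5,
        ncard_triple (Ne.symm hb1) (Ne.symm hs1) hbs]
      have : deg G v₂ = 3 := hd2
      omega
    by_cases hv3 : v = v₃
    · rw [hv3]
      rw [hN3, Set.image_insert_eq, Set.image_insert_eq, Set.image_singleton,
        hc'2, hc'o v₄ hv4R, hc'6,
        ncard_triple ha4 hat (Ne.symm ht4)]
      have : deg G v₃ = 3 := hd3
      omega
    by_cases hv5 : v = v₅
    · rw [hv5]
      rw [hN5, Set.image_insert_eq, Set.image_insert_eq, Set.image_singleton,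
        hc'2, hc'6, hc'o z hzR,
        ncard_triple hat haz htz]
      have : deg G v₅ = 3 := hd5
      omega
    by_cases hv6 : v = v₆
    · rw [hv6]
      rw [hN6, Set.image_insert_eq, Set.image_insert_eq, Set.image_singleton,
        hc'3, hc'5, hc'o w hwR,
        ncard_triple hbs hbcw hscw]
      have : deg G v₆ = 3 := hd6
      omega
    · have hvR : v ∉ ({v₂, v₃, v₅, v₆} : Set V) := by
        simp only [Set.mem_insert_iff, Set.mem_singleton_iff, not_or]
        exact ⟨hv2, hv3, hv5, hv6⟩
      refine outside_bound G v₂ v₃ v₅ v₆ c c' s t hc'5 hc'6 v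
        (fun u hu => hc'o u hu.2) (hkeyH v hvR) ?_ ?_ ?_
      · intro hm5 hD2
        have hvz : v = z := by
          have hmm : v ∈ G.neighborSet v₅ \ ({v₂, v₃, v₅, v₆} : Set V) :=
            ⟨hswap hm5, hvR⟩
          rw [hzS] at hmm
          exact hmm
        rw [hvz] at hD2 ⊢
        intro hsd
        exact hsF (Or.inl (Or.inr (by rw [hTs z hD2]; exact hsd)))
      · intro hm6 hD2
        have hvw : v = w := by
          have hmm : v ∈ G.neighborSet v₆ \ ({v₂, v₃, v₅, v₆} : Set V) :=
            ⟨hswap hm6, hvR⟩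
          rw [hwS] at hmm
          exact hmm
        rw [hvw] at hD2 ⊢
        intro htd
        exact htF (Or.inl (Or.inl (Or.inr (by rw [hTs w hD2]; exact htd))))
      · intro hm5 hm6 hD1
        have hvz : v = z := by
          have hmm : v ∈ G.neighborSet v₅ \ ({v₂, v₃, v₅, v₆} : Set V) :=
            ⟨hswap hm5, hvR⟩
          rw [hzS] at hmm
          exact hmm
        rw [hvz] at hD1 hm6
        have hzN6 : z ∈ G.neighborSet v₆ := hswap hm6
        have hcond : z ∈ G.neighborSet v₆ ∧
            (c '' (G.neighborSet z \ ({v₂, v₃, v₅, v₆} : Set V))).ncard ≤ 1 :=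
          ⟨hzN6, hD1⟩
        have hsFt : s ∈ (({c v₄} : Set (Fin 6)) ∪ T w ∪ {c z} ∪
            (if z ∈ G.neighborSet v₆ ∧
                (c '' (G.neighborSet z \ ({v₂, v₃, v₅, v₆} : Set V))).ncard ≤ 1 then
              ({s} : Set (Fin 6)) else ∅)) := Or.inr (by rw [if_pos hcond]; rfl)
        exact fun e => htF (e ▸ hsFt)
  · -- Case I : v₅ and v₆ not adjacent
    have hn65 : v₆ ∉ G.neighborSet v₅ := fun h => hA h
    have hn56 : v₅ ∉ G.neighborSet v₆ := fun h => hA (SimpleGraph.Adj.symm h)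
    have hN5R : G.neighborSet v₅ \ ({v₂, v₃, v₅, v₆} : Set V) =
        G.neighborSet v₅ \ {v₂} := by
      ext u
      simp only [Set.mem_diff, Set.mem_insert_iff, Set.mem_singleton_iff, not_or]
      constructor
      · rintro ⟨hu, h2', h3', h5', h6'⟩; exact ⟨hu, h2'⟩
      · rintro ⟨hu, h2'⟩
        exact ⟨hu, h2', fun e => hn35 (e ▸ hu), fun e => hn55 (e ▸ hu),
          fun e => hn65 (e ▸ hu)⟩
    have hcard5 : (G.neighborSet v₅ \ ({v₂, v₃, v₅, v₆} : Set V)).ncard = 2 := by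
      rw [hN5R, Set.ncard_diff_singleton_of_mem h25']
      have hq : (G.neighborSet v₅).ncard = 3 := hd5
      omega
    obtain ⟨x, y, hxy, hxyS⟩ := Set.ncard_eq_two.mp hcard5
    have hxmem : x ∈ G.neighborSet v₅ \ ({v₂, v₃, v₅, v₆} : Set V) := by
      rw [hxyS]; exact Set.mem_insert _ _
    have hymem : y ∈ G.neighborSet v₅ \ ({v₂, v₃, v₅, v₆} : Set V) := by
      rw [hxyS]; exact Set.mem_insert_of_mem _ rfl
    have hxN : x ∈ G.neighborSet v₅ := hxmem.1
    have hxR : x ∉ ({v₂, v₃, v₅, v₆} : Set V) := hxmem.2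
    have hyN : y ∈ G.neighborSet v₅ := hymem.1
    have hyR : y ∉ ({v₂, v₃, v₅, v₆} : Set V) := hymem.2
    have hx' : x ≠ v₂ ∧ x ≠ v₃ ∧ x ≠ v₅ ∧ x ≠ v₆ := by
      simpa only [Set.mem_insert_iff, Set.mem_singleton_iff, not_or] using hxR
    have hy' : y ≠ v₂ ∧ y ≠ v₃ ∧ y ≠ v₅ ∧ y ≠ v₆ := by
      simpa only [Set.mem_insert_iff, Set.mem_singleton_iff, not_or] using hyR
    have hN6R : G.neighborSet v₆ \ ({v₂, v₃, v₅, v₆} : Set V) =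
        G.neighborSet v₆ \ {v₃} := by
      ext u
      simp only [Set.mem_diff, Set.mem_insert_iff, Set.mem_singleton_iff, not_or]
      constructor
      · rintro ⟨hu, h2', h3', h5', h6'⟩; exact ⟨hu, h3'⟩
      · rintro ⟨hu, h3'⟩
        exact ⟨hu, fun e => hn26 (e ▸ hu), h3', fun e => hn56 (e ▸ hu),
          fun e => hn66 (e ▸ hu)⟩
    have hcard6 : (G.neighborSet v₆ \ ({v₂, v₃, v₅, v₆} : Set V)).ncard = 2 := by
      rw [hN6R, Set.ncard_diff_singleton_of_mem h36']
      have hq : (G.neighborSet v₆).ncard = 3 := hd6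
      omega
    obtain ⟨p, q, hpq, hpqS⟩ := Set.ncard_eq_two.mp hcard6
    have hpmem : p ∈ G.neighborSet v₆ \ ({v₂, v₃, v₅, v₆} : Set V) := by
      rw [hpqS]; exact Set.mem_insert _ _
    have hqmem : q ∈ G.neighborSet v₆ \ ({v₂, v₃, v₅, v₆} : Set V) := by
      rw [hpqS]; exact Set.mem_insert_of_mem _ rfl
    have hpN : p ∈ G.neighborSet v₆ := hpmem.1
    have hpR : p ∉ ({v₂, v₃, v₅, v₆} : Set V) := hpmem.2
    have hqN : q ∈ G.neighborSet v₆ := hqmem.1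
    have hqR : q ∉ ({v₂, v₃, v₅, v₆} : Set V) := hqmem.2
    have hp' : p ≠ v₂ ∧ p ≠ v₃ ∧ p ≠ v₅ ∧ p ≠ v₆ := by
      simpa only [Set.mem_insert_iff, Set.mem_singleton_iff, not_or] using hpR
    have hq' : q ≠ v₂ ∧ q ≠ v₃ ∧ q ≠ v₅ ∧ q ≠ v₆ := by
      simpa only [Set.mem_insert_iff, Set.mem_singleton_iff, not_or] using hqR
    have hN5 : G.neighborSet v₅ = {v₂, x, y} := by
      symm
      apply Set.eq_of_subset_of_ncard_le ?_ ?_ (Set.toFinite _)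
      · intro u hu
        rcases hu with h | h | h
        · subst h; exact h25'
        · subst h; exact hxN
        · rw [Set.mem_singleton_iff] at h; subst h; exact hyN
      · rw [ncard_triple (Ne.symm hx'.1) (Ne.symm hy'.1) hxy]
        exact hd5.le
    have hN6 : G.neighborSet v₆ = {v₃, p, q} := by
      symm
      apply Set.eq_of_subset_of_ncard_le ?_ ?_ (Set.toFinite _)
      · intro u hu
        rcases hu with h | h | h
        · subst h; exact h36'
        · subst h; exact hpN
        · rw [Set.mem_singleton_iff] at h; subst h; exact hqN
      · rw [ncard_triple (Ne.symm hp'.2.1) (Ne.symm hq'.2.1) hpq]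
        exact hd6.le
    -- two colors are seen by v₅ and by v₆ already
    have hH5 : H.neighborSet v₅ = ({x, y} : Set V) := by
      rw [hNH v₅ (Ne.symm e25) (Ne.symm e35), ← hxyS]
      ext u
      simp only [Set.mem_diff, Set.mem_insert_iff, Set.mem_singleton_iff, not_or]
      constructor
      · rintro ⟨hu, h2', h3'⟩
        exact ⟨hu, h2', h3', fun e => hn55 (e ▸ hu), fun e => hn65 (e ▸ hu)⟩
      · rintro ⟨hu, h2', h3', h5', h6'⟩; exact ⟨hu, h2', h3'⟩
    have hcc5 : 2 ≤ (c '' ({x, y} : Set V)).ncard := by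
      have hq := hc v₅
      unfold deg at hq
      rw [hH5, ncard_pair hxy] at hq
      simpa using hq
    have hH6 : H.neighborSet v₆ = ({p, q} : Set V) := by
      rw [hNH v₆ (Ne.symm e26) (Ne.symm e36), ← hpqS]
      ext u
      simp only [Set.mem_diff, Set.mem_insert_iff, Set.mem_singleton_iff, not_or]
      constructor
      · rintro ⟨hu, h2', h3'⟩
        exact ⟨hu, h2', h3', fun e => hn56 (e ▸ hu), fun e => hn66 (e ▸ hu)⟩
      · rintro ⟨hu, h2', h3', h5', h6'⟩; exact ⟨hu, h2', h3'⟩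
    have hcc6 : 2 ≤ (c '' ({p, q} : Set V)).ncard := by
      have hq := hc v₆
      unfold deg at hq
      rw [hH6, ncard_pair hpq] at hq
      simpa using hq
    -- pick the new colors
    obtain ⟨s, hsF⟩ := pick_color (({c v₁} : Set (Fin 6)) ∪ T x ∪ T y) (by
      have hu0 := Set.ncard_union_le (({c v₁} : Set (Fin 6)) ∪ T x) (T y)
      have hu1 := Set.ncard_union_le ({c v₁} : Set (Fin 6)) (T x)
      have hu2 := hTcard x
      have hu3 := hTcard y
      rw [Set.ncard_singleton] at *
      omega)
    obtain ⟨t, htF⟩ := pick_color (({c v₄} : Set (Fin 6)) ∪ T p ∪ T q ∪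
        (if (x ∈ G.neighborSet v₆ ∧
              (c '' (G.neighborSet x \ ({v₂, v₃, v₅, v₆} : Set V))).ncard ≤ 1) ∨
            (y ∈ G.neighborSet v₆ ∧
              (c '' (G.neighborSet y \ ({v₂, v₃, v₅, v₆} : Set V))).ncard ≤ 1) then
          ({s} : Set (Fin 6)) else ∅)) (by
      have hu0 := Set.ncard_union_le (({c v₄} : Set (Fin 6)) ∪ T p ∪ T q)
        (if (x ∈ G.neighborSet v₆ ∧
              (c '' (G.neighborSet x \ ({v₂, v₃, v₅, v₆} : Set V))).ncard ≤ 1) ∨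
            (y ∈ G.neighborSet v₆ ∧
              (c '' (G.neighborSet y \ ({v₂, v₃, v₅, v₆} : Set V))).ncard ≤ 1) then
          ({s} : Set (Fin 6)) else ∅)
      have hu1 := Set.ncard_union_le (({c v₄} : Set (Fin 6)) ∪ T p) (T q)
      have hu2 := Set.ncard_union_le ({c v₄} : Set (Fin 6)) (T p)
      have hu3 := hTcard p
      have hu4 := hTcard q
      by_cases hcond : (x ∈ G.neighborSet v₆ ∧
            (c '' (G.neighborSet x \ ({v₂, v₃, v₅, v₆} : Set V))).ncard ≤ 1) ∨
          (y ∈ G.neighborSet v₆ ∧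
            (c '' (G.neighborSet y \ ({v₂, v₃, v₅, v₆} : Set V))).ncard ≤ 1)
      · have hite : (if (x ∈ G.neighborSet v₆ ∧
              (c '' (G.neighborSet x \ ({v₂, v₃, v₅, v₆} : Set V))).ncard ≤ 1) ∨
            (y ∈ G.neighborSet v₆ ∧
              (c '' (G.neighborSet y \ ({v₂, v₃, v₅, v₆} : Set V))).ncard ≤ 1) then
            ({s} : Set (Fin 6)) else ∅).ncard ≤ 1 := by
          rw [if_pos hcond, Set.ncard_singleton]
        have hsmall : (T p).ncard ≤ 1 ∨ (T q).ncard ≤ 1 := by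
          rcases hcond with ⟨hxN6, hx1⟩ | ⟨hyN6, hy1⟩
          · have hmm : x ∈ G.neighborSet v₆ \ ({v₂, v₃, v₅, v₆} : Set V) := ⟨hxN6, hxR⟩
            rw [hpqS] at hmm
            rcases hmm with h | h
            · left; rw [← h, hTs x (le_trans hx1 (by norm_num))]; exact hx1
            · right
              rw [Set.mem_singleton_iff] at h
              rw [← h, hTs x (le_trans hx1 (by norm_num))]; exact hx1
          · have hmm : y ∈ G.neighborSet v₆ \ ({v₂, v₃, v₅, v₆} : Set V) := ⟨hyN6, hyR⟩
            rw [hpqS] at hmm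
            rcases hmm with h | h
            · left; rw [← h, hTs y (le_trans hy1 (by norm_num))]; exact hy1
            · right
              rw [Set.mem_singleton_iff] at h
              rw [← h, hTs y (le_trans hy1 (by norm_num))]; exact hy1
        rw [Set.ncard_singleton] at *
        omega
      · have hite : (if (x ∈ G.neighborSet v₆ ∧
              (c '' (G.neighborSet x \ ({v₂, v₃, v₅, v₆} : Set V))).ncard ≤ 1) ∨
            (y ∈ G.neighborSet v₆ ∧
              (c '' (G.neighborSet y \ ({v₂, v₃, v₅, v₆} : Set V))).ncard ≤ 1) then
            ({s} : Set (Fin 6)) else ∅).ncard = 0 := by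
          rw [if_neg hcond, Set.ncard_empty]
        rw [Set.ncard_singleton] at *
        omega)
    obtain ⟨a, haF⟩ := pick_color (({c v₄, t} : Set (Fin 6)) ∪
        c '' (G.neighborSet v₅ \ ({v₂, v₃, v₅, v₆} : Set V))) (by
      have hu0 := Set.ncard_union_le ({c v₄, t} : Set (Fin 6))
        (c '' (G.neighborSet v₅ \ ({v₂, v₃, v₅, v₆} : Set V)))
      have hu1 : ({c v₄, t} : Set (Fin 6)).ncard ≤ 2 :=
        le_trans (Set.ncard_insert_le _ _) (by rw [Set.ncard_singleton])
      have hu2 : (c '' (G.neighborSet v₅ \ ({v₂, v₃, v₅, v₆} : Set V))).ncard ≤ 2 := by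
        refine le_trans (Set.ncard_image_le (Set.toFinite _)) ?_
        rw [hcard5]
      omega)
    obtain ⟨b, hbF⟩ := pick_color (({c v₁, s} : Set (Fin 6)) ∪
        c '' (G.neighborSet v₆ \ ({v₂, v₃, v₅, v₆} : Set V))) (by
      have hu0 := Set.ncard_union_le ({c v₁, s} : Set (Fin 6))
        (c '' (G.neighborSet v₆ \ ({v₂, v₃, v₅, v₆} : Set V)))
      have hu1 : ({c v₁, s} : Set (Fin 6)).ncard ≤ 2 :=
        le_trans (Set.ncard_insert_le _ _) (by rw [Set.ncard_singleton])
      have hu2 : (c '' (G.neighborSet v₆ \ ({v₂, v₃, v₅, v₆} : Set V))).ncard ≤ 2 := by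
        refine le_trans (Set.ncard_image_le (Set.toFinite _)) ?_
        rw [hcard6]
      omega)
    -- the new coloring
    set c' : V → Fin 6 := fun u =>
      if u = v₂ then a else if u = v₃ then b else if u = v₅ then s else if u = v₆ then t
      else c u with hc'def
    have hc'2 : c' v₂ = a := by
      show (if v₂ = v₂ then a else if v₂ = v₃ then b else if v₂ = v₅ then s
        else if v₂ = v₆ then t else c v₂) = a
      rw [if_pos rfl]
    have hc'3 : c' v₃ = b := by
      show (if v₃ = v₂ then a else if v₃ = v₃ then b else if v₃ = v₅ then s
        else if v₃ = v₆ then t else c v₃) = b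
      rw [if_neg (Ne.symm e23), if_pos rfl]
    have hc'5 : c' v₅ = s := by
      show (if v₅ = v₂ then a else if v₅ = v₃ then b else if v₅ = v₅ then s
        else if v₅ = v₆ then t else c v₅) = s
      rw [if_neg (Ne.symm e25), if_neg (Ne.symm e35), if_pos rfl]
    have hc'6 : c' v₆ = t := by
      show (if v₆ = v₂ then a else if v₆ = v₃ then b else if v₆ = v₅ then s
        else if v₆ = v₆ then t else c v₆) = t
      rw [if_neg (Ne.symm e26), if_neg (Ne.symm e36), if_neg (Ne.symm e56), if_pos rfl]
    have hc'o : ∀ u : V, u ∉ ({v₂, v₃, v₅, v₆} : Set V) → c' u = c u := by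
      intro u hu
      simp only [Set.mem_insert_iff, Set.mem_singleton_iff, not_or] at hu
      show (if u = v₂ then a else if u = v₃ then b else if u = v₅ then s
        else if u = v₆ then t else c u) = c u
      rw [if_neg hu.1, if_neg hu.2.1, if_neg hu.2.2.1, if_neg hu.2.2.2]
    -- color distinctness facts
    have hb1 : b ≠ c v₁ := fun e => hbF (by rw [e]; exact Or.inl (Set.mem_insert _ _))
    have hbs : b ≠ s := fun e => hbF (by rw [e]; exact Or.inl (Set.mem_insert_of_mem _ rfl))
    have hs1 : s ≠ c v₁ := fun e => hsF (by rw [e]; exact Or.inl (Or.inl rfl))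
    have ha4 : a ≠ c v₄ := fun e => haF (by rw [e]; exact Or.inl (Set.mem_insert _ _))
    have hat : a ≠ t := fun e => haF (by rw [e]; exact Or.inl (Set.mem_insert_of_mem _ rfl))
    have ht4 : t ≠ c v₄ := fun e => htF (by rw [e]; exact Or.inl (Or.inl (Or.inl rfl)))
    have haim : a ∉ c '' ({x, y} : Set V) := fun hmem => haF (Or.inr (by
      rw [hxyS]; exact hmem))
    have hbim : b ∉ c '' ({p, q} : Set V) := fun hmem => hbF (Or.inr (by
      rw [hpqS]; exact hmem))
    refine hcex ⟨c', fun v => ?_⟩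
    by_cases hv2 : v = v₂
    · rw [hv2]
      rw [hN2, Set.image_insert_eq, Set.image_insert_eq, Set.image_singleton,
        hc'o v₁ hv1R, hc'3, hc'5,
        ncard_triple (Ne.symm hb1) (Ne.symm hs1) hbs]
      have hq : deg G v₂ = 3 := hd2
      omega
    by_cases hv3 : v = v₃
    · rw [hv3]
      rw [hN3, Set.image_insert_eq, Set.image_insert_eq, Set.image_singleton,
        hc'2, hc'o v₄ hv4R, hc'6,
        ncard_triple ha4 hat (Ne.symm ht4)]
      have hq : deg G v₃ = 3 := hd3
      omega
    by_cases hv5 : v = v₅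
    · rw [hv5]
      rw [hN5, Set.image_insert_eq, Set.image_insert_eq, Set.image_singleton,
        hc'2, hc'o x hxR, hc'o y hyR]
      have him : ({c x, c y} : Set (Fin 6)) = c '' ({x, y} : Set V) := by
        rw [Set.image_insert_eq, Set.image_singleton]
      have hnm : a ∉ ({c x, c y} : Set (Fin 6)) := by rw [him]; exact haim
      rw [Set.ncard_insert_of_notMem hnm (Set.toFinite _)]
      have hge : 2 ≤ ({c x, c y} : Set (Fin 6)).ncard := by rw [him]; exact hcc5
      have hmin : min 3 (deg G v₅) ≤ 3 := min_le_left _ _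
      omega
    by_cases hv6 : v = v₆
    · rw [hv6]
      rw [hN6, Set.image_insert_eq, Set.image_insert_eq, Set.image_singleton,
        hc'3, hc'o p hpR, hc'o q hqR]
      have him : ({c p, c q} : Set (Fin 6)) = c '' ({p, q} : Set V) := by
        rw [Set.image_insert_eq, Set.image_singleton]
      have hnm : b ∉ ({c p, c q} : Set (Fin 6)) := by rw [him]; exact hbim
      rw [Set.ncard_insert_of_notMem hnm (Set.toFinite _)]
      have hge : 2 ≤ ({c p, c q} : Set (Fin 6)).ncard := by rw [him]; exact hcc6
      have hmin : min 3 (deg G v₆) ≤ 3 := min_le_left _ _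
      omega
    · have hvR : v ∉ ({v₂, v₃, v₅, v₆} : Set V) := by
        simp only [Set.mem_insert_iff, Set.mem_singleton_iff, not_or]
        exact ⟨hv2, hv3, hv5, hv6⟩
      refine outside_bound G v₂ v₃ v₅ v₆ c c' s t hc'5 hc'6 v
        (fun u hu => hc'o u hu.2) (hkeyH v hvR) ?_ ?_ ?_
      · intro hm5 hD2
        have hmm : v ∈ G.neighborSet v₅ \ ({v₂, v₃, v₅, v₆} : Set V) := ⟨hswap hm5, hvR⟩
        rw [hxyS] at hmm
        rcases hmm with h | h
        · rw [h] at hD2 ⊢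
          intro hsd
          exact hsF (Or.inl (Or.inr (by rw [hTs x hD2]; exact hsd)))
        · rw [Set.mem_singleton_iff] at h
          rw [h] at hD2 ⊢
          intro hsd
          exact hsF (Or.inr (by rw [hTs y hD2]; exact hsd))
      · intro hm6 hD2
        have hmm : v ∈ G.neighborSet v₆ \ ({v₂, v₃, v₅, v₆} : Set V) := ⟨hswap hm6, hvR⟩
        rw [hpqS] at hmm
        rcases hmm with h | h
        · rw [h] at hD2 ⊢
          intro htd
          exact htF (Or.inl (Or.inl (Or.inr (by rw [hTs p hD2]; exact htd))))
        · rw [Set.mem_singleton_iff] at h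
          rw [h] at hD2 ⊢
          intro htd
          exact htF (Or.inl (Or.inr (by rw [hTs q hD2]; exact htd)))
      · intro hm5 hm6 hD1
        have hmm : v ∈ G.neighborSet v₅ \ ({v₂, v₃, v₅, v₆} : Set V) := ⟨hswap hm5, hvR⟩
        rw [hxyS] at hmm
        have hvN6 : v ∈ G.neighborSet v₆ := hswap hm6
        have hcond : (x ∈ G.neighborSet v₆ ∧
              (c '' (G.neighborSet x \ ({v₂, v₃, v₅, v₆} : Set V))).ncard ≤ 1) ∨
            (y ∈ G.neighborSet v₆ ∧
              (c '' (G.neighborSet y \ ({v₂, v₃, v₅, v₆} : Set V))).ncard ≤ 1) := by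
          rcases hmm with h | h
          · left
            rw [h] at hvN6 hD1
            exact ⟨hvN6, hD1⟩
          · right
            rw [Set.mem_singleton_iff] at h
            rw [h] at hvN6 hD1
            exact ⟨hvN6, hD1⟩
        have hsFt : s ∈ (({c v₄} : Set (Fin 6)) ∪ T p ∪ T q ∪
            (if (x ∈ G.neighborSet v₆ ∧
                  (c '' (G.neighborSet x \ ({v₂, v₃, v₅, v₆} : Set V))).ncard ≤ 1) ∨
                (y ∈ G.neighborSet v₆ ∧
                  (c '' (G.neighborSet y \ ({v₂, v₃, v₅, v₆} : Set V))).ncard ≤ 1) then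
              ({s} : Set (Fin 6)) else ∅)) := Or.inr (by rw [if_pos hcond]; rfl)
        exact fun e => htF (e ▸ hsFt)
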